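/- Let k be a field, R a commutative k-algebra, and L a Lie algebra over k which is also an R-module whose scalar action is compatible with the k-structure, and which is faithful as an R-module (r • x = 0 for all x ∈ L implies r = 0). Suppose ρ : L → Der_k(R) is a k-linear map into the k-derivations of R satisfying the Leibniz identity ⁅x, a • y⁆ = a • ⁅x, y⁆ + (ρ(x)(a)) • y for all x, y ∈ L and a ∈ R. Then ρ is a Lie algebra homomorphism: ρ(⁅x, y⁆) = ρ(x) ∘ ρ(y) − ρ(y) ∘ ρ(x) (the commutator bracket of derivations) for all x, y ∈ L. (The anchor of a Lie algebroid, or of a Lie–Rinehart algebra, is automatically a morphism.) -/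
import Mathlib


/-- The anchor of a Lie–Rinehart algebra is automatically a morphism.  Let `k` be a field,
`R` a commutative `k`-algebra, and `L` a Lie algebra over `k` which is also a faithful
`R`-module compatibly with the `k`-structure.  If `ρ : L → Der_k(R)` is `k`-linear and
satisfies the Leibniz identity `⁅x, a • y⁆ = a • ⁅x, y⁆ + (ρ(x)(a)) • y`, then `ρ` is a Lie
algebra homomorphism into the derivations with the commutator bracket. -/
theorem lieRinehart_anchor_is_morphism
    (k R L : Type*) [Field k] [CommRing R] [Algebra k R]
    [LieRing L] [LieAlgebra k L]
    [Module R L] [IsScalarTower k R L]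
    (hfaithful : ∀ r : R, (∀ x : L, r • x = 0) → r = 0)
    (ρ : L →ₗ[k] Derivation k R R)
    (hleibniz : ∀ (x y : L) (a : R), ⁅x, a • y⁆ = a • ⁅x, y⁆ + (ρ x a) • y) :
    ∀ x y : L, ρ ⁅x, y⁆ = ⁅ρ x, ρ y⁆ ∧ ∀ a : R, ρ ⁅x, y⁆ a = ρ x (ρ y a) - ρ y (ρ x a) := by
  have key : ∀ (x y : L) (a : R), ρ ⁅x, y⁆ a = ρ x (ρ y a) - ρ y (ρ x a) := by
    intro x y a
    have h0 : ρ ⁅x, y⁆ a - (ρ x (ρ y a) - ρ y (ρ x a)) = 0 := by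
      apply hfaithful
      intro z
      have E : ⁅⁅x, y⁆, a • z⁆ = ⁅x, ⁅y, a • z⁆⁆ - ⁅y, ⁅x, a • z⁆⁆ := lie_lie _ _ _
      rw [hleibniz, hleibniz, lie_add, hleibniz, hleibniz, hleibniz, lie_add, hleibniz,
        hleibniz, lie_lie] at E
      linear_combination (norm := module) E
    exact sub_eq_zero.mp h0
  intro x y
  refine ⟨?_, key x y⟩
  ext a
  rw [key x y a]
  simp [Derivation.commutator_apply]
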